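/- Let S ⊆ ℤ_+^n be a strongly stable set of vectors of common modulus d. Then for all u, v ∈ S with u ≠ v there exist indices i and j with u(i) > v(i) and u(j) < v(j) such that u − ε_i + ε_j ∈ S or v − ε_j + ε_i ∈ S. -/
import Mathlib


/-- Example 2.6(e): a strongly stable set `S ⊆ ℤ_+^n` of vectors of common
modulus `d` (i.e. `u − ε_i + ε_j ∈ S` whenever `u ∈ S`, `u(i) > 0` and
`j < i`) satisfies the following weak form of the exchange property: for all
`u, v ∈ S` with `u ≠ v` there exist `i` and `j` with `u(i) > v(i)` and
`u(j) < v(j)` such that `u − ε_i + ε_j ∈ S` or `v − ε_j + ε_i ∈ S`. -/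
theorem stronglyStable_weak_exchange {n d : ℕ} (S : Set (Fin n → ℕ))
    (hmod : ∀ u ∈ S, ∑ i, u i = d)
    (hstable : ∀ u ∈ S, ∀ i : Fin n, 0 < u i → ∀ j : Fin n, j < i →
      u - Pi.single i 1 + Pi.single j 1 ∈ S) :
    ∀ u ∈ S, ∀ v ∈ S, u ≠ v →
      ∃ i j : Fin n, v i < u i ∧ u j < v j ∧
        (u - Pi.single i 1 + Pi.single j 1 ∈ S ∨
          v - Pi.single j 1 + Pi.single i 1 ∈ S) := by
  classical
  intro u hu v hv huv
  have hne : ∃ k, u k ≠ v k := by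
    by_contra h; push_neg at h; exact huv (funext h)
  obtain ⟨k, hk, hkmin⟩ := Finset.exists_min_image
    (Finset.univ.filter (fun i => u i ≠ v i)) id
    (by obtain ⟨k, hk⟩ := hne; exact ⟨k, by simp [hk]⟩)
  simp only [Finset.mem_filter, Finset.mem_univ, true_and, id] at hk hkmin
  have hsum : ∑ i, u i = ∑ i, v i := by rw [hmod u hu, hmod v hv]
  rcases lt_or_gt_of_ne hk with h1 | h1
  · -- u k < v k; find j with v j < u j
    have hex : ∃ j, v j < u j := by
      by_contra h; push_neg at h
      have := Finset.sum_lt_sum (fun i _ => h i) ⟨k, Finset.mem_univ k, h1⟩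
      omega
    obtain ⟨j, hj⟩ := hex
    have hkj : k < j := by
      rcases lt_trichotomy k j with h | h | h
      · exact h
      · subst h; omega
      · exact absurd (hkmin j (by omega)) (not_le.mpr h)
    exact ⟨j, k, hj, h1, Or.inl (hstable u hu j (by omega) k hkj)⟩
  · -- v k < u k; find j with u j < v j
    have hex : ∃ j, u j < v j := by
      by_contra h; push_neg at h
      have := Finset.sum_lt_sum (fun i _ => h i) ⟨k, Finset.mem_univ k, h1⟩
      omega
    obtain ⟨j, hj⟩ := hex
    have hkj : k < j := by
      rcases lt_trichotomy k j with h | h | h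
      · exact h
      · subst h; omega
      · exact absurd (hkmin j (by omega)) (not_le.mpr h)
    exact ⟨k, j, h1, hj, Or.inr (hstable v hv j (by omega) k hkj)⟩
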